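/- arXiv:2001.01778 — 3 statements merged into one kernel-verified Lean document; each statement's English description precedes it below -/
import Mathlib

section
/- For integers satisfying 2 ≤ r₁ ≤ r₂ ≤ ⋯ ≤ r_δ < k, δ ≥ 1, θ an integer with 0 ≤ θ ≤ δ - 2, and X = r₁ + ⋯ + r_δ, Y = r₁ + ⋯ + r_{θ+1}, one has (1+X)(1+θ) - 1 - Y·δ ≥ θ. -/
theorem stmt_0 (δ k θ : ℕ) (r : ℕ → ℤ)
    (hδ : 1 ≤ δ)
    (hr2 : ∀ i, 1 ≤ i → i ≤ δ → 2 ≤ r i)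
    (hmono : ∀ i j, 1 ≤ i → i ≤ j → j ≤ δ → r i ≤ r j)
    (hrk : ∀ i, 1 ≤ i → i ≤ δ → r i < k)
    (hθ : θ + 2 ≤ δ)
    (X Y : ℤ)
    (hX : X = ∑ i ∈ Finset.Icc 1 δ, r i)
    (hY : Y = ∑ i ∈ Finset.Icc 1 (θ + 1), r i) :
    (1 + X) * (1 + (θ : ℤ)) - 1 - Y * δ ≥ (θ : ℤ) := by
  set m := θ + 1 with hm
  have hmδ : m ≤ δ := by omega
  set a := r m with ha
  set Z : ℤ := ∑ i ∈ Finset.Icc (m + 1) δ, r i with hZ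
  have hsplit : X = Y + Z := by
    rw [hX, hY, hZ]
    rw [show Finset.Icc 1 δ = Finset.Ioc 0 δ by rfl,
        show Finset.Icc 1 m = Finset.Ioc 0 m by rfl,
        show Finset.Icc (m + 1) δ = Finset.Ioc m δ by
          ext x; simp only [Finset.mem_Icc, Finset.mem_Ioc]; omega]
    exact (Finset.sum_Ioc_consecutive _ (Nat.zero_le m) hmδ).symm
  have hYle : Y ≤ (m : ℤ) * a := by
    rw [hY]
    calc ∑ i ∈ Finset.Icc 1 m, r i ≤ ∑ _i ∈ Finset.Icc 1 m, a :=
          Finset.sum_le_sum (fun i hi => by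
            simp only [Finset.mem_Icc] at hi
            exact hmono i m hi.1 hi.2 hmδ)
      _ = (m : ℤ) * a := by simp [Nat.card_Icc, mul_comm]
  have hZge : ((δ : ℤ) - m) * a ≤ Z := by
    rw [hZ]
    calc ((δ : ℤ) - m) * a = ∑ _i ∈ Finset.Icc (m + 1) δ, a := by
          rw [Finset.sum_const, Nat.card_Icc, nsmul_eq_mul]
          congr 1
          have : δ + 1 - (m + 1) = δ - m := by omega
          rw [this, Nat.cast_sub hmδ]
      _ ≤ ∑ i ∈ Finset.Icc (m + 1) δ, r i :=
          Finset.sum_le_sum (fun i hi => by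
            simp only [Finset.mem_Icc] at hi
            exact hmono m i (by omega) (by omega) hi.2)
  have ha2 : 2 ≤ a := hr2 m (by omega) hmδ
  have hδθ : (θ : ℤ) + 2 ≤ (δ : ℤ) := by exact_mod_cast hθ
  have hm' : (m : ℤ) = (θ : ℤ) + 1 := by simp [hm]
  rw [hm'] at hYle hZge
  rw [hsplit]
  nlinarith [mul_le_mul_of_nonneg_right hYle (by linarith : (0:ℤ) ≤ (δ:ℤ) - ((θ:ℤ)+1)),
    mul_le_mul_of_nonneg_right hZge (by linarith : (0:ℤ) ≤ (θ:ℤ)+1),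
    mul_pos (by linarith : (0:ℤ) < (δ:ℤ) - ((θ:ℤ)+1)) (by linarith : (0:ℤ) < a)]
end

section
/- Let q be an odd prime power and ℓ ≥ 1 odd. The number of points (x,y) ∈ 𝔽_{q^{2ℓ}}² with y^{q^ℓ+1} = x^q + x and y ≠ 0 equals q^{2ℓ+1} - q. -/
open Finset Polynomial

private lemma frob_add {F : Type*} [Field F] {p : ℕ} [Fact p.Prime] [CharP F p]
    {q : ℕ} (hq : ∃ m, q = p ^ m) (a b : F) : (a + b) ^ q = a ^ q + b ^ q := by
  obtain ⟨m, rfl⟩ := hq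
  exact add_pow_char_pow a b _ _

private lemma frob_sub {F : Type*} [Field F] {p : ℕ} [Fact p.Prime] [CharP F p]
    {q : ℕ} (hq : ∃ m, q = p ^ m) (a b : F) : (a - b) ^ q = a ^ q - b ^ q := by
  obtain ⟨m, rfl⟩ := hq
  exact sub_pow_char_pow a b _

theorem stmt_12 (q ℓ : ℕ) (hq : ∃ (p m : ℕ), p.Prime ∧ 0 < m ∧ q = p ^ m)
    (hqodd : Odd q) (hℓ : 1 ≤ ℓ) (hℓodd : Odd ℓ)
    (F : Type*) [Field F] [Fintype F] (hF : Fintype.card F = q ^ (2 * ℓ)) :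
    {p : F × F | p.2 ^ (q ^ ℓ + 1) = p.1 ^ q + p.1 ∧ p.2 ≠ 0}.ncard
      = q ^ (2 * ℓ + 1) - q := by
  classical
  obtain ⟨p, m, hp, hm, hqe⟩ := hq
  haveI : Fact p.Prime := ⟨hp⟩
  -- p is odd
  have hpodd : p ≠ 2 := by
    rintro rfl
    have : Even (2 ^ m) := (Nat.even_pow).mpr ⟨even_two, hm.ne'⟩
    rw [hqe] at hqodd
    exact (Nat.not_odd_iff_even.mpr this) hqodd
  -- characteristic of F is p
  have hcharF : CharP F p := by
    set r := ringChar F with hr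
    haveI : CharP F r := ringChar.charP F
    have hrp : r.Prime := CharP.char_is_prime F r
    have hdvd : r ∣ Fintype.card F := (CharP.cast_eq_zero_iff F r _).mp
      (FiniteField.cast_card_eq_zero F)
    rw [hF, hqe, ← pow_mul] at hdvd
    have : r = p := (Nat.prime_dvd_prime_iff_eq hrp hp).mp (hrp.dvd_of_dvd_pow hdvd)
    rwa [← this]
  haveI := hcharF
  have htwo : (2 : F) ≠ 0 := by
    intro h
    have : p ∣ 2 := by
      have := (CharP.cast_eq_zero_iff F p 2).mp (by exact_mod_cast h)
      exact this
    exact hpodd ((Nat.prime_dvd_prime_iff_eq hp Nat.prime_two).mp this)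
  have hq2 : 2 ≤ q := by
    rw [hqe]
    calc 2 ≤ p := hp.two_le
    _ = p ^ 1 := (pow_one p).symm
    _ ≤ p ^ m := Nat.pow_le_pow_right hp.pos hm
  have hq0 : 0 < q := by omega
  have hq1 : 1 ≤ q ^ ℓ := Nat.one_le_pow _ _ hq0
  -- frobenius facts
  have hfq : ∃ m', q = p ^ m' := ⟨m, hqe⟩
  have hfql : ∃ m', q ^ ℓ = p ^ m' := ⟨m * ℓ, by rw [hqe, pow_mul]⟩
  -- powers of card
  have hpowcard : ∀ a : F, a ^ (q ^ (2 * ℓ)) = a := by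
    intro a; rw [← hF]; exact FiniteField.pow_card a
  have hneg1 : ((-1 : F)) ^ q = -1 := Odd.neg_one_pow hqodd
  have hneg1l : ((-1 : F)) ^ ℓ = -1 := Odd.neg_one_pow hℓodd
  -- Lemma D
  have lemD : ∀ d : F, d ^ q + d = 0 → d ^ (q ^ ℓ) = d → d = 0 := by
    intro d h1 h2
    have hdq : d ^ q = -d := by linear_combination h1
    have key : ∀ i, d ^ (q ^ i) = (-1) ^ i * d := by
      intro i
      induction i with
      | zero => simp
      | succ i ih =>
        have e1 : d ^ q ^ (i + 1) = (d ^ q ^ i) ^ q := by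
          rw [← pow_mul, pow_succ]
        rw [e1, ih, mul_pow, hdq, ← pow_mul, mul_comm i q, pow_mul, hneg1, pow_succ]
        ring
    have := key ℓ
    rw [h2, hneg1l] at this
    have h2d : 2 * d = 0 := by linear_combination this
    rcases mul_eq_zero.mp h2d with h | h
    · exact absurd h htwo
    · exact h
  -- kernel finset
  set K : Finset F := univ.filter (fun x : F => x ^ q + x = 0) with hK
  -- cyclic group generator
  obtain ⟨g, hg⟩ := IsCyclic.exists_generator (α := Fˣ)
  have hordg : orderOf g = q ^ (2 * ℓ) - 1 := by
    rw [orderOf_eq_card_of_forall_mem_zpowers hg, Nat.card_eq_fintype_card,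
      Fintype.card_units, hF]
  set N := q ^ (2 * ℓ) - 1 with hN
  have hN0 : 0 < N := by
    have : 2 ≤ q ^ (2 * ℓ) := le_trans hq2 (Nat.le_self_pow (by omega) q)
    omega
  -- 2*(q-1) ∣ N
  have hdvdN : (q - 1) * 2 ∣ N := by
    have hsq : q ^ (2 * ℓ) = (q ^ ℓ) * (q ^ ℓ) := by
      rw [two_mul, pow_add]
    obtain ⟨k, hk⟩ : ∃ k, q ^ ℓ = k + 1 := ⟨q ^ ℓ - 1, by omega⟩
    have hfact : N = (q ^ ℓ - 1) * (q ^ ℓ + 1) := by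
      have h2 : (k + 1) * (k + 1) = k * (k + 2) + 1 := by ring
      rw [hN, hsq, hk, h2]
      simp only [Nat.add_sub_cancel]
    rw [hfact]
    refine mul_dvd_mul ?_ ?_
    · have := Nat.sub_dvd_pow_sub_pow q 1 ℓ
      simpa using this
    · obtain ⟨t, ht⟩ := hqodd.pow (n := ℓ)
      omega
  have hdvdq1 : q - 1 ∣ N := dvd_trans (Dvd.intro 2 rfl) hdvdN
  -- order of powers of g
  have hordpow : ∀ d : ℕ, 0 < d → d ∣ N → orderOf (g ^ (N / d)) = d := by
    intro d hd hdvd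
    rw [orderOf_pow, hordg]
    have h1 : N / d ∣ N := Nat.div_dvd_of_dvd hdvd
    rw [Nat.gcd_eq_right h1, Nat.div_div_self hdvd hN0.ne']
  -- primitive (q-1)-th root of unity
  have hq1pos : 0 < q - 1 := by omega
  set u : Fˣ := g ^ (N / (q - 1)) with hu
  have hordu : orderOf u = q - 1 := hordpow _ hq1pos hdvdq1
  have hζ : IsPrimitiveRoot ((u : F)) (q - 1) := by
    have : orderOf ((u : F)) = q - 1 := by rw [orderOf_units, hordu]
    rw [← this]
    exact IsPrimitiveRoot.orderOf _
  -- an element α with α^(q-1) = -1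
  have hexα : ∃ α : F, α ^ (q - 1) = -1 := by
    set w : Fˣ := g ^ (N / ((q - 1) * 2)) with hw
    have hordw : orderOf w = (q - 1) * 2 := hordpow _ (by omega) hdvdN
    refine ⟨(w : F), ?_⟩
    have hsq : ((w : F) ^ (q - 1)) * ((w : F) ^ (q - 1)) = 1 := by
      rw [← pow_add]
      have : (w : F) ^ ((q - 1) * 2) = ((w ^ ((q - 1) * 2) : Fˣ) : F) := by
        push_cast; ring
      rw [show q - 1 + (q - 1) = (q - 1) * 2 by ring, this, ← hordw, pow_orderOf_eq_one]
      simp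
    rcases mul_self_eq_one_iff.mp hsq with h | h
    · exfalso
      have : w ^ (q - 1) = 1 := by
        ext; push_cast; exact h
      have := orderOf_dvd_of_pow_eq_one this
      rw [hordw] at this
      have := Nat.le_of_dvd hq1pos this
      omega
    · exact h
  obtain ⟨α, hα⟩ := hexα
  -- kernel card = q
  have hKcard : K.card = q := by
    have hmem : ∀ x : F, x ∈ K ↔ x = 0 ∨ x ^ (q - 1) = -1 := by
      intro x
      simp only [hK, mem_filter, mem_univ, true_and]
      constructor
      · intro h
        by_cases hx : x = 0
        · exact Or.inl hx
        · right
          have hxq : x ^ (q - 1) * x = -1 * x := by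
            rw [← pow_succ]
            have : q - 1 + 1 = q := by omega
            rw [this]
            linear_combination h
          exact mul_right_cancel₀ hx hxq
      · rintro (rfl | h)
        · simp [zero_pow (by omega : q ≠ 0)]
        · have hx : x ≠ 0 := by
            intro h0; rw [h0, zero_pow (by omega : q - 1 ≠ 0), eq_comm, neg_eq_zero] at h
            exact one_ne_zero h
          have : x ^ q = x ^ (q - 1) * x := by
            rw [← pow_succ]; congr 1; omega
          rw [this, h]; ring
    have hKeq : K = insert (0 : F) ((nthRoots (q - 1) (-1 : F)).toFinset) := by
      ext x
      rw [hmem x, mem_insert, Multiset.mem_toFinset, mem_nthRoots hq1pos]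
    rw [hKeq, card_insert_of_notMem, Multiset.toFinset_card_of_nodup
      (hζ.nthRoots_nodup (by simp : (-1 : F) ≠ 0)),
      hζ.card_nthRoots, if_pos ⟨α, hα⟩]
    · omega
    · rw [Multiset.mem_toFinset, mem_nthRoots hq1pos, zero_pow (by omega : q - 1 ≠ 0)]
      intro h
      rw [eq_comm, neg_eq_zero] at h
      exact one_ne_zero h
  -- fiber card = q for c fixed by q^ℓ frobenius
  have fiber : ∀ c : F, c ^ (q ^ ℓ) = c →
      (univ.filter fun x : F => x ^ q + x = c).card = q := by
    intro c hc
    set E : Finset F := univ.filter (fun x : F => x ^ (q ^ ℓ) = x) with hE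
    have hmaps : ∀ x ∈ E, (x ^ q + x) ∈ E := by
      intro x hx
      simp only [hE, mem_filter, mem_univ, true_and] at hx ⊢
      rw [frob_add hfql, ← pow_mul, mul_comm q (q ^ ℓ), pow_mul, hx]
    have hinj : Set.InjOn (fun x : F => x ^ q + x) (E : Set F) := by
      intro x hx y hy hxy
      simp only [hE, coe_filter, Set.mem_setOf_eq, mem_univ, true_and] at hx hy
      simp only at hxy
      have h1 : (x - y) ^ q + (x - y) = 0 := by
        rw [frob_sub hfq]
        linear_combination hxy
      have h2 : (x - y) ^ (q ^ ℓ) = x - y := by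
        rw [frob_sub hfql, hx, hy]
      have := lemD _ h1 h2
      exact sub_eq_zero.mp this
    have himg : E.image (fun x : F => x ^ q + x) = E := by
      apply Finset.eq_of_subset_of_card_le
      · intro z hz
        obtain ⟨x, hx, rfl⟩ := Finset.mem_image.mp hz
        exact hmaps x hx
      · rw [Finset.card_image_of_injOn hinj]
    have hcE : c ∈ E := by simp [hE, hc]
    obtain ⟨x0, hx0E, hx0⟩ := Finset.mem_image.mp (himg ▸ hcE)
    -- bijection fiber ≃ K
    have : (univ.filter fun x : F => x ^ q + x = c).card = K.card := by
      refine Finset.card_bij' (fun x _ => x - x0) (fun k _ => k + x0) ?_ ?_ ?_ ?_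
      · intro x hx
        simp only [mem_filter, mem_univ, true_and] at hx
        simp only [hK, mem_filter, mem_univ, true_and]
        rw [frob_sub hfq]
        linear_combination hx - hx0
      · intro k hk
        simp only [hK, mem_filter, mem_univ, true_and] at hk
        simp only [mem_filter, mem_univ, true_and]
        rw [frob_add hfq]
        linear_combination hk + hx0
      · intro x _; ring
      · intro k _; ring
    rw [this, hKcard]
  -- main count
  have hset : {p : F × F | p.2 ^ (q ^ ℓ + 1) = p.1 ^ q + p.1 ∧ p.2 ≠ 0}
      = ↑(univ.filter fun p : F × F => p.2 ^ (q ^ ℓ + 1) = p.1 ^ q + p.1 ∧ p.2 ≠ 0) := by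
    ext x; simp
  rw [hset, Set.ncard_coe_finset]
  set S := univ.filter fun p : F × F => p.2 ^ (q ^ ℓ + 1) = p.1 ^ q + p.1 ∧ p.2 ≠ 0 with hS
  have hfib : S.card = ∑ y ∈ univ.filter (fun y : F => y ≠ 0),
      (S.filter fun p => p.2 = y).card := by
    apply Finset.card_eq_sum_card_fiberwise
    intro x hx
    simp only [hS, coe_filter, mem_coe, mem_filter, mem_univ, true_and] at hx
    simp [hx.2]
  rw [hfib]
  have hfibval : ∀ y ∈ univ.filter (fun y : F => y ≠ 0),
      (S.filter fun p => p.2 = y).card = q := by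
    intro y hy
    simp only [mem_filter, mem_univ, true_and] at hy
    have hcy : (y ^ (q ^ ℓ + 1)) ^ (q ^ ℓ) = y ^ (q ^ ℓ + 1) := by
      rw [← pow_mul]
      have he : (q ^ ℓ + 1) * q ^ ℓ = q ^ (2 * ℓ) + q ^ ℓ := by
        rw [add_mul, one_mul, ← pow_add, two_mul]
      rw [he, pow_add, hpowcard, ← pow_succ']
    have := fiber (y ^ (q ^ ℓ + 1)) hcy
    rw [← this]
    refine Finset.card_bij' (fun p _ => p.1) (fun x _ => (x, y)) ?_ ?_ ?_ ?_
    · intro a ha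
      simp only [hS, mem_filter, mem_univ, true_and] at ha
      simp only [mem_filter, mem_univ, true_and]
      rw [← ha.2]
      exact ha.1.1.symm
    · intro x hx
      simp only [mem_filter, mem_univ, true_and] at hx
      simp only [hS, mem_filter, mem_univ, true_and]
      exact ⟨⟨hx.symm, hy⟩, trivial⟩
    · intro a ha
      simp only [hS, mem_filter, mem_univ, true_and] at ha
      exact Prod.ext rfl ha.2.symm
    · intro x _; rfl
  rw [Finset.sum_congr rfl hfibval, Finset.sum_const, smul_eq_mul]
  have hcardfilter : (univ.filter (fun y : F => y ≠ 0)).card = q ^ (2 * ℓ) - 1 := by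
    rw [Finset.filter_ne', Finset.card_erase_of_mem (mem_univ 0), Finset.card_univ, hF]
  rw [hcardfilter]
  have : 1 ≤ q ^ (2 * ℓ) := Nat.one_le_pow _ _ hq0
  rw [Nat.sub_mul, one_mul, pow_succ]
end

section
/- Let q be a prime power. The number of affine 𝔽_{q⁶}-rational points (x,y,z) on the Giulietti–Korchmáros curve {z^{q²-q+1} = y^{q²} - y, y^{q+1} = x^q + x} with z ≠ 0 equals q⁸ - q⁶ + q⁵ - q³ = q³(q²-1)(q³+1). -/
open Finset Polynomial


section Helpers

variable {F : Type*} [Field F] [Fintype F] [DecidableEq F]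

lemma card_eval_le (P : F → Prop) [DecidablePred P] (k : ℕ) (p : F[X]) (hp : p ≠ 0)
    (hdeg : p.natDegree ≤ k) (hev : ∀ x, P x → p.eval x = 0) :
    #(univ.filter P) ≤ k := by
  refine le_trans (le_trans (Finset.card_le_card ?_) (Multiset.toFinset_card_le _))
    (le_trans p.card_roots' hdeg)
  intro x hx
  rw [Finset.mem_filter] at hx
  rw [Multiset.mem_toFinset, Polynomial.mem_roots hp]
  exact hev x hx.2

lemma card_pow_eq_le (n : ℕ) (hn : 0 < n) (c : F) :
    #(univ.filter fun z : F => z ^ n = c) ≤ n := by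
  refine card_eval_le _ n (X ^ n - C c) (Polynomial.monic_X_pow_sub_C c hn.ne').ne_zero
    (le_of_eq (Polynomial.natDegree_X_pow_sub_C)) fun x hx => ?_
  simp [hx]

lemma add_fiber_card (f : F → F) (hf : ∀ a b, f (a + b) = f a + f b) (a x₀ : F)
    (hx₀ : f x₀ = a) :
    #(univ.filter fun x => f x = a) = #(univ.filter fun x => f x = 0) := by
  have h0 : f 0 = 0 := by
    have := hf 0 0
    rw [add_zero] at this
    exact (left_eq_add.mp this)
  have hneg : ∀ b, f (-b) = - f b := by
    intro b
    have := hf b (-b)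
    rw [add_neg_cancel, h0] at this
    linear_combination -this
  have hsub : ∀ u v, f (u - v) = f u - f v := by
    intro u v
    rw [sub_eq_add_neg, hf, hneg, ← sub_eq_add_neg]
  refine Finset.card_nbij' (fun x => x - x₀) (fun x => x + x₀) ?_ ?_ ?_ ?_
  · intro x hx
    rw [Finset.mem_coe, Finset.mem_filter] at hx ⊢
    exact ⟨Finset.mem_univ _, by rw [hsub, hx.2, hx₀, sub_self]⟩
  · intro x hx
    rw [Finset.mem_coe, Finset.mem_filter] at hx ⊢
    exact ⟨Finset.mem_univ _, by rw [hf, hx.2, hx₀, zero_add]⟩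
  · intro x _; ring
  · intro x _; ring

lemma add_map_count (f g : F → F) (hf : ∀ a b, f (a + b) = f a + f b)
    (hcomp : ∀ x, g (f x) = 0) (k K : ℕ) (hk : 0 < k)
    (hcard : Fintype.card F = k * K)
    (hker : #(univ.filter fun x => f x = 0) ≤ k)
    (hcoker : #(univ.filter fun u => g u = 0) ≤ K) :
    ∀ a : F, g a = 0 → #(univ.filter fun x => f x = a) = k := by
  have h0 : f 0 = 0 := by
    have := hf 0 0
    rw [add_zero] at this
    exact (left_eq_add.mp this)
  set I := univ.image f with hI
  have hIsub : I ⊆ univ.filter fun u => g u = 0 := by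
    intro u hu
    rw [hI, Finset.mem_image] at hu
    obtain ⟨x, _, rfl⟩ := hu
    exact Finset.mem_filter.mpr ⟨Finset.mem_univ _, hcomp x⟩
  have hIle : #I ≤ K := le_trans (Finset.card_le_card hIsub) hcoker
  have hprod : #I * #(univ.filter fun x => f x = 0) = Fintype.card F := by
    rw [← Finset.card_univ]
    rw [Finset.card_eq_sum_card_fiberwise
      (fun x _ => Finset.mem_image_of_mem f (Finset.mem_univ x) : ∀ x ∈ univ, f x ∈ I)]
    rw [Finset.sum_congr rfl (fun a ha => ?_), Finset.sum_const, smul_eq_mul]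
    obtain ⟨x₀, _, hx₀⟩ := Finset.mem_image.mp ha
    exact add_fiber_card f hf a x₀ hx₀
  have hKpos : 0 < K := by
    rcases Nat.eq_zero_or_pos K with h | h
    · exfalso
      rw [h, Nat.mul_zero] at hcard
      have := Fintype.card_pos (α := F)
      omega
    · exact h
  have hker_ge : k ≤ #(univ.filter fun x => f x = 0) := by
    refine Nat.le_of_mul_le_mul_right ?_ hKpos
    calc k * K = #I * #(univ.filter fun x => f x = 0) := by rw [← hcard, ← hprod]
    _ ≤ K * #(univ.filter fun x => f x = 0) := Nat.mul_le_mul_right _ hIle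
    _ = #(univ.filter fun x => f x = 0) * K := Nat.mul_comm _ _
  have hker_eq : #(univ.filter fun x => f x = 0) = k := le_antisymm hker hker_ge
  have hIeq : #I = K := by
    refine Nat.eq_of_mul_eq_mul_right hk ?_
    have h2 : #I * k = k * K := by rw [← hker_eq, hprod, hcard, hker_eq]
    rw [h2, Nat.mul_comm]
  have hIfull : I = univ.filter fun u => g u = 0 :=
    Finset.eq_of_subset_of_card_le hIsub (by rw [hIeq]; exact hcoker)
  intro a ha
  have haI : a ∈ I := by rw [hIfull]; exact Finset.mem_filter.mpr ⟨Finset.mem_univ _, ha⟩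
  obtain ⟨x₀, _, hx₀⟩ := Finset.mem_image.mp haI
  rw [add_fiber_card f hf a x₀ hx₀, hker_eq]

end Helpers

section MulHelpers

variable {G : Type*} [CommGroup G] [Fintype G] [DecidableEq G]

lemma mul_fiber_card (f : G → G) (hf : ∀ a b, f (a * b) = f a * f b) (a x₀ : G)
    (hx₀ : f x₀ = a) :
    #(univ.filter fun x => f x = a) = #(univ.filter fun x => f x = 1) := by
  have h0 : f 1 = 1 := by
    have := hf 1 1
    rw [mul_one] at this
    exact (left_eq_mul.mp this)
  have hinv : ∀ b, f b⁻¹ = (f b)⁻¹ := by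
    intro b
    have := hf b b⁻¹
    rw [mul_inv_cancel, h0] at this
    exact (inv_eq_of_mul_eq_one_right this.symm).symm
  have hdiv : ∀ u v, f (u / v) = f u / f v := by
    intro u v
    rw [div_eq_mul_inv, hf, hinv, ← div_eq_mul_inv]
  refine Finset.card_nbij' (fun x => x * x₀⁻¹) (fun x => x * x₀) ?_ ?_ ?_ ?_
  · intro x hx
    rw [Finset.mem_coe, Finset.mem_filter] at hx ⊢
    exact ⟨Finset.mem_univ _, by rw [hf, hinv, hx.2, hx₀, mul_inv_cancel]⟩
  · intro x hx
    rw [Finset.mem_coe, Finset.mem_filter] at hx ⊢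
    exact ⟨Finset.mem_univ _, by rw [hf, hx.2, hx₀, one_mul]⟩
  · intro x _; exact inv_mul_cancel_right x x₀
  · intro x _; exact mul_inv_cancel_right x x₀

lemma mul_map_count (f g : G → G) (hf : ∀ a b, f (a * b) = f a * f b)
    (hcomp : ∀ x, g (f x) = 1) (k K : ℕ) (hk : 0 < k)
    (hcard : Fintype.card G = k * K)
    (hker : #(univ.filter fun x => f x = 1) ≤ k)
    (hcoker : #(univ.filter fun u => g u = 1) ≤ K) :
    ∀ a : G, g a = 1 → #(univ.filter fun x => f x = a) = k := by
  have h0 : f 1 = 1 := by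
    have := hf 1 1
    rw [mul_one] at this
    exact (left_eq_mul.mp this)
  set I := univ.image f with hI
  have hIsub : I ⊆ univ.filter fun u => g u = 1 := by
    intro u hu
    rw [hI, Finset.mem_image] at hu
    obtain ⟨x, _, rfl⟩ := hu
    exact Finset.mem_filter.mpr ⟨Finset.mem_univ _, hcomp x⟩
  have hIle : #I ≤ K := le_trans (Finset.card_le_card hIsub) hcoker
  have hprod : #I * #(univ.filter fun x => f x = 1) = Fintype.card G := by
    rw [← Finset.card_univ]
    rw [Finset.card_eq_sum_card_fiberwise
      (fun x _ => Finset.mem_image_of_mem f (Finset.mem_univ x) : ∀ x ∈ univ, f x ∈ I)]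
    rw [Finset.sum_congr rfl (fun a ha => ?_), Finset.sum_const, smul_eq_mul]
    obtain ⟨x₀, _, hx₀⟩ := Finset.mem_image.mp ha
    exact mul_fiber_card f hf a x₀ hx₀
  have hKpos : 0 < K := by
    rcases Nat.eq_zero_or_pos K with h | h
    · exfalso
      rw [h, Nat.mul_zero] at hcard
      have := Fintype.card_pos (α := G)
      omega
    · exact h
  have hker_ge : k ≤ #(univ.filter fun x => f x = 1) := by
    refine Nat.le_of_mul_le_mul_right ?_ hKpos
    calc k * K = #I * #(univ.filter fun x => f x = 1) := by rw [← hcard, ← hprod]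
    _ ≤ K * #(univ.filter fun x => f x = 1) := Nat.mul_le_mul_right _ hIle
    _ = #(univ.filter fun x => f x = 1) * K := Nat.mul_comm _ _
  have hker_eq : #(univ.filter fun x => f x = 1) = k := le_antisymm hker hker_ge
  have hIeq : #I = K := by
    refine Nat.eq_of_mul_eq_mul_right hk ?_
    have h2 : #I * k = k * K := by rw [← hker_eq, hprod, hcard, hker_eq]
    rw [h2, Nat.mul_comm]
  have hIfull : I = univ.filter fun u => g u = 1 :=
    Finset.eq_of_subset_of_card_le hIsub (by rw [hIeq]; exact hcoker)
  intro a ha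
  have haI : a ∈ I := by rw [hIfull]; exact Finset.mem_filter.mpr ⟨Finset.mem_univ _, ha⟩
  obtain ⟨x₀, _, hx₀⟩ := Finset.mem_image.mp haI
  rw [mul_fiber_card f hf a x₀ hx₀, hker_eq]

end MulHelpers

section PowCount

variable {F : Type*} [Field F] [Fintype F] [DecidableEq F]

lemma pow_count (n n' : ℕ) (hn : 0 < n) (hN : n * n' = Fintype.card F - 1)
    (c : F) (hc : c ≠ 0) (hc' : c ^ n' = 1) :
    #(univ.filter fun z : F => z ^ n = c) = n := by
  have hcardF : 2 ≤ Fintype.card F := Fintype.one_lt_card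
  have hn' : 0 < n' := by
    rcases Nat.eq_zero_or_pos n' with h | h
    · subst h; simp at hN; omega
    · exact h
  have hcardU : Fintype.card Fˣ = n * n' := by
    rw [Fintype.card_units, hN]
  have hbound : ∀ (d : Fˣ) (nn : ℕ), 0 < nn →
      #(univ.filter fun u : Fˣ => u ^ nn = d) ≤ nn := by
    intro d nn hnn
    refine le_trans (Finset.card_le_card_of_injOn (fun u => (u : F)) ?_ ?_)
      (card_pow_eq_le nn hnn (d : F))
    · intro u hu
      rw [Finset.mem_coe, Finset.mem_filter] at hu ⊢
      refine ⟨Finset.mem_univ _, ?_⟩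
      rw [← Units.val_pow_eq_pow_val, hu.2]
    · intro u _ v _ h
      exact Units.ext h
  have key : #(univ.filter fun u : Fˣ => u ^ n = Units.mk0 c hc) = n := by
    refine mul_map_count (fun u => u ^ n) (fun u => u ^ n') (fun a b => mul_pow a b n)
      (fun x => ?_) n n' hn hcardU (hbound 1 n hn) (hbound 1 n' hn') _ ?_
    · show (x ^ n) ^ n' = 1
      rw [← pow_mul, ← hcardU, pow_card_eq_one]
    · refine Units.ext ?_
      rw [Units.val_pow_eq_pow_val]
      exact hc'
  have transfer : #(univ.filter fun z : F => z ^ n = c)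
      = #(univ.filter fun u : Fˣ => u ^ n = Units.mk0 c hc) := by
    refine Finset.card_bij (fun z hz => Units.mk0 z ?_) ?_ ?_ ?_
    · rw [Finset.mem_filter] at hz
      intro h
      rw [h, zero_pow hn.ne'] at hz
      exact hc hz.2.symm
    · intro z hz
      refine Finset.mem_filter.mpr ⟨Finset.mem_univ _, Units.ext ?_⟩
      rw [Units.val_pow_eq_pow_val]
      exact (Finset.mem_filter.mp hz).2
    · intro a ha b hb h
      have := congrArg (Units.val) h
      simpa using this
    · intro u hu
      rw [Finset.mem_filter] at hu
      refine ⟨(u : F), Finset.mem_filter.mpr ⟨Finset.mem_univ _, ?_⟩, Units.ext rfl⟩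
      rw [← Units.val_pow_eq_pow_val, hu.2]
      rfl
  rw [transfer]
  exact key

end PowCount


section Frob
variable {R : Type*} [CommRing R] {q : ℕ}

lemma frob_add_iter (hadd : ∀ a b : R, (a + b) ^ q = a ^ q + b ^ q) :
    ∀ (j : ℕ) (a b : R), (a + b) ^ q ^ j = a ^ q ^ j + b ^ q ^ j := by
  intro j
  induction j with
  | zero => intro a b; simp
  | succ j ih =>
    intro a b
    rw [pow_succ, pow_mul, pow_mul, pow_mul, ih, hadd]

lemma frob_sub_iter (hq : 0 < q) (hadd : ∀ a b : R, (a + b) ^ q = a ^ q + b ^ q) :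
    ∀ (j : ℕ) (a b : R), (a - b) ^ q ^ j = a ^ q ^ j - b ^ q ^ j := by
  have hneg : ∀ (j : ℕ) (b : R), (-b) ^ q ^ j = -(b ^ q ^ j) := by
    intro j b
    have h := frob_add_iter hadd j b (-b)
    rw [add_neg_cancel, zero_pow (pow_ne_zero j hq.ne')] at h
    linear_combination -h
  intro j a b
  rw [sub_eq_add_neg, frob_add_iter hadd j, hneg, ← sub_eq_add_neg]

lemma vlemma {K : Type*} [Field K] {q : ℕ} (hq : 0 < q)
    (hadd : ∀ a b : K, (a + b) ^ q = a ^ q + b ^ q) {v : K}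
    (hv : v ^ (q + 1) + v ^ q + 1 = 0) :
    v ^ (q ^ 3) = v ∧ v ^ (q ^ 2 + q + 1) = 1 ∧ v ^ (q ^ 2 + 1) + v + 1 = 0 := by
  have step : ∀ u : K, u ^ (q + 1) + u ^ q + 1 = 0 →
      (u ^ q) ^ (q + 1) + (u ^ q) ^ q + 1 = 0 := by
    intro u hu
    have h : (u ^ (q + 1) + u ^ q + 1) ^ q = 0 := by rw [hu]; exact zero_pow hq.ne'
    rw [hadd, hadd, one_pow] at h
    linear_combination h
  have hv0 : v ≠ 0 := by
    intro h
    rw [h, zero_pow (Nat.succ_ne_zero q), zero_pow hq.ne'] at hv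
    simp at hv
  have h1 : v ^ q * v + v ^ q + 1 = 0 := by linear_combination hv
  have h2 : v ^ (q * q) * v ^ q + v ^ (q * q) + 1 = 0 := by
    linear_combination step v hv
  have h3 : v ^ (q * q * q) * v ^ (q * q) + v ^ (q * q * q) + 1 = 0 := by
    linear_combination step _ (step v hv)
  have habc : v * v ^ q * v ^ (q * q) = 1 := by
    linear_combination v ^ (q * q) * h1 - h2
  have hbcd : v ^ q * v ^ (q * q) * v ^ (q * q * q) = 1 := by
    linear_combination v ^ (q * q * q) * h2 - h3
  have h4 : v * (v ^ q * v ^ (q * q)) = v ^ (q * q * q) * (v ^ q * v ^ (q * q)) := by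
    linear_combination habc - hbcd
  have h5 : v = v ^ (q * q * q) :=
    mul_right_cancel₀ (mul_ne_zero (pow_ne_zero _ hv0) (pow_ne_zero _ hv0)) h4
  refine ⟨?_, ?_, ?_⟩
  · rw [show q ^ 3 = q * q * q by ring]
    exact h5.symm
  · rw [show q ^ 2 + q + 1 = q * q + q + 1 by ring]
    linear_combination habc
  · have h6 : v ^ q * (v ^ (q * q) * v + v + 1) = 0 := by linear_combination habc + h1
    have h7 := (mul_eq_zero.mp h6).resolve_left (pow_ne_zero _ hv0)
    rw [show q ^ 2 + 1 = q * q + 1 by ring]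
    linear_combination h7

lemma Tcomp (hadd : ∀ a b : R, (a + b) ^ q = a ^ q + b ^ q)
    (x : R) (hx : x ^ q ^ 6 = x) :
    (x ^ q + x) ^ q ^ 5 - (x ^ q + x) ^ q ^ 4 + (x ^ q + x) ^ q ^ 3 - (x ^ q + x) ^ q ^ 2
      + (x ^ q + x) ^ q - (x ^ q + x) = 0 := by
  have h1 : (x ^ q + x) ^ q = (x ^ q) ^ q + x ^ q := hadd _ _
  have h2 := frob_add_iter hadd 2 (x ^ q) x
  have h3 := frob_add_iter hadd 3 (x ^ q) x
  have h4 := frob_add_iter hadd 4 (x ^ q) x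
  have h5 := frob_add_iter hadd 5 (x ^ q) x
  linear_combination h5 - h4 + h3 - h2 + h1 + hx

lemma Mcomp (hq : 0 < q) (hadd : ∀ a b : R, (a + b) ^ q = a ^ q + b ^ q)
    (y : R) (hy : y ^ q ^ 6 = y) :
    (y ^ q ^ 2 - y) ^ q ^ 4 + (y ^ q ^ 2 - y) ^ q ^ 2 + (y ^ q ^ 2 - y) = 0 := by
  linear_combination (frob_sub_iter hq hadd 4 (y ^ q ^ 2) y)
    + (frob_sub_iter hq hadd 2 (y ^ q ^ 2) y) + hy

lemma keyT (hq : 0 < q) (hadd : ∀ a b : R, (a + b) ^ q = a ^ q + b ^ q)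
    (y : R) (hy : y ^ q ^ 6 = y) :
    (y ^ (q + 1)) ^ q ^ 5 - (y ^ (q + 1)) ^ q ^ 4 + (y ^ (q + 1)) ^ q ^ 3
      - (y ^ (q + 1)) ^ q ^ 2 + (y ^ (q + 1)) ^ q - y ^ (q + 1)
      + ((y ^ q ^ 2 - y) ^ (q ^ 3 + q ^ 2) + (y ^ q ^ 2 - y) ^ (q ^ 3 + 1)
        + (y ^ q ^ 2 - y) ^ (q + 1)) = 0 := by
  have hs1 : (y ^ q ^ 2 - y) ^ q = (y ^ q ^ 2) ^ q - y ^ q := by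
    have := frob_sub_iter hq hadd 1 (y ^ q ^ 2) y
    simpa using this
  have hs2 := frob_sub_iter hq hadd 2 (y ^ q ^ 2) y
  have hs3 := frob_sub_iter hq hadd 3 (y ^ q ^ 2) y
  rw [show (y ^ q ^ 2 - y) ^ (q ^ 3 + q ^ 2)
        = (y ^ q ^ 2 - y) ^ q ^ 3 * (y ^ q ^ 2 - y) ^ q ^ 2 from pow_add _ _ _,
      show (y ^ q ^ 2 - y) ^ (q ^ 3 + 1)
        = (y ^ q ^ 2 - y) ^ q ^ 3 * (y ^ q ^ 2 - y) from by rw [pow_add, pow_one],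
      show (y ^ q ^ 2 - y) ^ (q + 1)
        = (y ^ q ^ 2 - y) ^ q * (y ^ q ^ 2 - y) from by rw [pow_succ],
      hs1, hs2, hs3]
  linear_combination y ^ q ^ 5 * hy

lemma herm_pow (hq : 0 < q) (hadd : ∀ a b : R, (a + b) ^ q = a ^ q + b ^ q)
    (x y : R) (hx : x ^ q ^ 6 = x) (hy : y ^ q ^ 6 = y)
    (hherm : y ^ (q + 1) = x ^ q + x) :
    ((y ^ q ^ 2 - y) ^ (q + 1)) ^ q ^ 3 = (y ^ q ^ 2 - y) ^ (q + 1) := by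
  have hj : ∀ j : ℕ, (y ^ (q + 1)) ^ q ^ j = (x ^ q) ^ q ^ j + x ^ q ^ j := by
    intro j
    rw [hherm]
    exact frob_add_iter hadd j _ _
  have h0 := hj 0
  have h1 := hj 1
  have h2 := hj 2
  have h3 := hj 3
  have h4 := hj 4
  have h5 := hj 5
  have hs1 : (y ^ q ^ 2 - y) ^ q = (y ^ q ^ 2) ^ q - y ^ q := by
    have := frob_sub_iter hq hadd 1 (y ^ q ^ 2) y
    simpa using this
  have hs3 := frob_sub_iter hq hadd 3 (y ^ q ^ 2) y
  have hs4 := frob_sub_iter hq hadd 4 (y ^ q ^ 2) y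
  rw [show (y ^ q ^ 2 - y) ^ (q + 1)
        = (y ^ q ^ 2 - y) ^ q * (y ^ q ^ 2 - y) from by rw [pow_succ],
      mul_pow, ← pow_mul (y ^ q ^ 2 - y) q (q ^ 3),
      show q * q ^ 3 = q ^ 4 by ring, hs4, hs3, hs1]
  linear_combination (h5 - h4 + h3 - h2 + h1 - h0) - y ^ q ^ 3 * hy + hx

end Frob



lemma stageV {F : Type*} [Field F] [Fintype F] [DecidableEq F] (p m q : ℕ)
    (hpp : p.Prime) (hm : 0 < m) (hqe : q = p ^ m) [CharP F p]
    (hF : Fintype.card F = q ^ 6) :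
    #(univ.filter fun v : F => v ^ (q + 1) + v ^ q + 1 = 0) = q + 1 := by
  haveI : Fact p.Prime := ⟨hpp⟩
  classical
  have hq2 : 2 ≤ q := by
    rw [hqe]
    calc 2 = 2 ^ 1 := (pow_one 2).symm
    _ ≤ 2 ^ m := Nat.pow_le_pow_right (by omega) hm
    _ ≤ p ^ m := Nat.pow_le_pow_left hpp.two_le m
  have hq0 : 0 < q := by omega
  have hqF : (q : F) = 0 := by
    rw [hqe]
    push_cast
    rw [CharP.cast_eq_zero F p]
    exact zero_pow hm.ne'
  have hadd : ∀ a b : F, (a + b) ^ q = a ^ q + b ^ q := by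
    intro a b; rw [hqe]; exact add_pow_char_pow a b p m
  set P : F[X] := X ^ (q + 1) + (X ^ q + 1) with hP
  have hdlt : degree ((X : F[X]) ^ q + 1) < ((q + 1 : ℕ) : WithBot ℕ) := by
    refine lt_of_le_of_lt (degree_add_le _ _) ?_
    rw [degree_X_pow, degree_one]
    rw [max_eq_left (by exact_mod_cast Nat.zero_le q : (0 : WithBot ℕ) ≤ (q : WithBot ℕ))]
    exact_mod_cast Nat.lt_succ_self q
  have hmonic : P.Monic := by
    rw [hP]
    exact monic_X_pow_add hdlt
  have hPne : P ≠ 0 := hmonic.ne_zero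
  have hdegP : P.degree = ((q + 1 : ℕ) : WithBot ℕ) := by
    rw [hP, degree_add_eq_left_of_degree_lt (by rw [degree_X_pow]; exact hdlt), degree_X_pow]
  have hndegP : P.natDegree = q + 1 := natDegree_eq_of_degree_eq_some hdegP
  have hder : derivative P = X ^ q := by
    rw [hP]
    rw [derivative_add, derivative_add, derivative_one, derivative_X_pow, derivative_X_pow,
      add_zero, Nat.add_sub_cancel]
    push_cast
    rw [hqF]
    simp
  have hsep : P.Separable := by
    rw [Polynomial.separable_def, hder]
    have hcop : IsCoprime P (X : F[X]) := by
      refine ⟨1, -(X ^ q + X ^ (q - 1)), ?_⟩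
      rw [one_mul, hP, neg_mul, add_mul, ← pow_succ, ← pow_succ, show q - 1 + 1 = q from by omega]
      ring
    exact hcop.pow_right
  -- the big divisibility
  set K := AlgebraicClosure F
  have hinj : Function.Injective (algebraMap F K) := (algebraMap F K).injective
  haveI : CharP K p := charP_of_injective_algebraMap hinj p
  have haddK : ∀ a b : K, (a + b) ^ q = a ^ q + b ^ q := by
    intro a b; rw [hqe]; exact add_pow_char_pow a b p m
  set Q : F[X] := X ^ (q ^ 6) - X with hQ
  have hq6 : 1 < q ^ 6 := by
    calc 1 < 2 ^ 6 := by norm_num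
    _ ≤ q ^ 6 := Nat.pow_le_pow_left hq2 6
  have hQmonic : Q.Monic := by
    rw [hQ]
    refine monic_X_pow_sub ?_
    rw [degree_X]
    exact_mod_cast hq6
  have hQne : Q ≠ 0 := hQmonic.ne_zero
  have hQmapne : Q.map (algebraMap F K) ≠ 0 := (hQmonic.map _).ne_zero
  have hPmap : P.map (algebraMap F K) = X ^ (q + 1) + (X ^ q + 1) := by
    rw [hP]
    simp [Polynomial.map_add, Polynomial.map_pow, Polynomial.map_one]
  have hQmap : Q.map (algebraMap F K) = X ^ (q ^ 6) - X := by
    rw [hQ]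
    simp [Polynomial.map_sub, Polynomial.map_pow]
  have hdvdK : P.map (algebraMap F K) ∣ Q.map (algebraMap F K) := by
    have hprodeq : ((P.map (algebraMap F K)).roots.map fun a => X - C a).prod
        = P.map (algebraMap F K) :=
      ((IsAlgClosed.splits _).eq_prod_roots_of_monic (hmonic.map _)).symm
    rw [← hprodeq, Multiset.prod_X_sub_C_dvd_iff_le_roots hQmapne, Multiset.le_iff_count]
    intro a
    by_cases ha : a ∈ (P.map (algebraMap F K)).roots
    · have h1 : Multiset.count a (P.map (algebraMap F K)).roots ≤ 1 :=
        Multiset.nodup_iff_count_le_one.mp (nodup_roots hsep.map) a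
      have hroot : a ^ (q + 1) + a ^ q + 1 = 0 := by
        have h := (mem_roots (hmonic.map (algebraMap F K)).ne_zero).mp ha
        rw [Polynomial.IsRoot, hPmap] at h
        rw [eval_add, eval_add, eval_pow, eval_pow, eval_X, eval_one, ← add_assoc] at h
        exact h
      obtain ⟨h3, -, -⟩ := vlemma hq0 haddK hroot
      have ha6 : a ^ (q ^ 6) = a := by
        rw [show q ^ 6 = q ^ 3 * q ^ 3 from by ring, pow_mul, h3, h3]
      have h2 : a ∈ (Q.map (algebraMap F K)).roots := by
        rw [mem_roots hQmapne, hQmap]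
        show Polynomial.IsRoot _ a
        rw [Polynomial.IsRoot]
        simp [ha6]
      have := Multiset.one_le_count_iff_mem.mpr h2
      omega
    · simp [Multiset.count_eq_zero_of_notMem ha]
  have hdvd : P ∣ Q := (map_dvd_map' (algebraMap F K)).mp hdvdK
  have hQroots : Q.roots = univ.val := by
    have := FiniteField.roots_X_pow_card_sub_X F
    rw [hF] at this
    exact this
  have hQsplits : Q.Splits := by
    rw [splits_iff_card_roots, hQroots, FiniteField.X_pow_card_sub_X_natDegree_eq F hq6]
    exact Finset.card_univ.trans hF
  have hPsplits : P.Splits := Splits.of_dvd hQsplits hQne hdvd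
  have hProotscard : Multiset.card P.roots = q + 1 := by
    rw [splits_iff_card_roots.mp hPsplits, hndegP]
  have hfe : (univ.filter fun v : F => v ^ (q + 1) + v ^ q + 1 = 0) = P.roots.toFinset := by
    ext v
    rw [Finset.mem_filter, Multiset.mem_toFinset, mem_roots hPne]
    constructor
    · rintro ⟨-, hv⟩
      rw [Polynomial.IsRoot, hP]
      rw [eval_add, eval_add, eval_pow, eval_pow, eval_X, eval_one, ← add_assoc]
      exact hv
    · intro hv
      rw [Polynomial.IsRoot, hP,
        eval_add, eval_add, eval_pow, eval_pow, eval_X, eval_one, ← add_assoc] at hv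
      exact ⟨Finset.mem_univ _, hv⟩
  rw [hfe, Multiset.toFinset_card_of_nodup (nodup_roots hsep), hProotscard]

theorem stmt_16 (q : ℕ) (hq : ∃ (p m : ℕ), p.Prime ∧ 0 < m ∧ q = p ^ m)
    (F : Type*) [Field F] [Fintype F] (hF : Fintype.card F = q ^ 6) :
    {p : F × F × F | p.2.2 ^ (q ^ 2 - q + 1) = p.2.1 ^ (q ^ 2) - p.2.1 ∧
        p.2.1 ^ (q + 1) = p.1 ^ q + p.1 ∧ p.2.2 ≠ 0}.ncard
      = q ^ 8 - q ^ 6 + q ^ 5 - q ^ 3 ∧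
    q ^ 8 - q ^ 6 + q ^ 5 - q ^ 3 = q ^ 3 * (q ^ 2 - 1) * (q ^ 3 + 1) := by
  classical
  obtain ⟨p, m, hpp, hm, hqe⟩ := hq
  haveI : Fact p.Prime := ⟨hpp⟩
  have hq2 : 2 ≤ q := by
    rw [hqe]
    calc 2 = 2 ^ 1 := (pow_one 2).symm
    _ ≤ 2 ^ m := Nat.pow_le_pow_right (by omega) hm
    _ ≤ p ^ m := Nat.pow_le_pow_left hpp.two_le m
  have hq0 : 0 < q := by omega
  -- characteristic
  haveI hcharF : CharP F p := by
    haveI := ringChar.charP F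
    obtain ⟨n0, hrp, hc⟩ := FiniteField.card F (ringChar F)
    rw [hF, hqe, ← pow_mul] at hc
    have hdvd : ringChar F ∣ p ^ (m * 6) := by
      rw [hc]
      exact dvd_pow_self _ n0.pos.ne'
    have : ringChar F = p := (Nat.prime_dvd_prime_iff_eq hrp hpp).mp (hrp.dvd_of_dvd_pow hdvd)
    exact this ▸ ringChar.charP F
  have hqF : (q : F) = 0 := by
    rw [hqe]
    push_cast
    rw [CharP.cast_eq_zero F p]
    exact zero_pow hm.ne'
  have hadd : ∀ a b : F, (a + b) ^ q = a ^ q + b ^ q := by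
    intro a b; rw [hqe]; exact add_pow_char_pow a b p m
  have hpow6 : ∀ a : F, a ^ q ^ 6 = a := by
    intro a
    have := FiniteField.pow_card a
    rw [hF] at this
    exact this
  -- arithmetic facts
  have hqq2 : q ≤ q ^ 2 := by nlinarith
  have h1q2 : 1 ≤ q ^ 2 := by nlinarith
  have h1q3 : 1 ≤ q ^ 3 := Nat.one_le_pow _ _ hq0
  have hn1pos : 0 < q ^ 2 - q + 1 := by omega
  have hnn' : (q ^ 2 - q + 1) * ((q + 1) * (q ^ 3 - 1)) = q ^ 6 - 1 := by
    zify [hqq2, h1q3, Nat.one_le_pow 6 q hq0]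
    ring
  have he1 : (q + 1) + (q + 1) * (q ^ 2 - 1) = q ^ 3 + q ^ 2 := by
    zify [h1q2]; ring
  have he2 : (q + 1) + q * (q ^ 2 - 1) = q ^ 3 + 1 := by
    zify [h1q2]; ring
  have he6 : (q + 1) * (q ^ 3 - 1) + (q + 1) = (q + 1) * q ^ 3 := by
    zify [h1q3]; ring
  have he4 : 1 + (q ^ 2 - 1) * (q ^ 2 + 1) = q ^ 4 := by
    zify [h1q2]; ring
  have he5 : (q ^ 2 - 1) + 1 = q ^ 2 := by omega
  have hcv : (q ^ 2 - 1) * (q ^ 4 + q ^ 2 + 1) = q ^ 6 - 1 := by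
    zify [h1q2, Nat.one_le_pow 6 q hq0]
    ring
  -- the four linearized-polynomial counting bounds
  have hpow_ne : ∀ i j : ℕ, i < j → (q ^ i : ℕ) ≠ q ^ j := fun i j h =>
    (Nat.pow_lt_pow_right hq2 h).ne
  have hker_L_le : #(univ.filter fun x : F => x ^ q + x = 0) ≤ q := by
    refine card_eval_le _ q (X ^ q + X) ?_ ?_ ?_
    · refine (monic_X_pow_add ?_).ne_zero
      rw [degree_X]
      exact_mod_cast hq2
    · refine le_trans (natDegree_add_le _ _) ?_
      simp only [natDegree_X_pow, natDegree_X]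
      omega
    · intro x hx; simpa using hx
  have hcoker_T_le : #(univ.filter fun u : F =>
      u ^ q ^ 5 - u ^ q ^ 4 + u ^ q ^ 3 - u ^ q ^ 2 + u ^ q - u = 0) ≤ q ^ 5 := by
    refine card_eval_le _ (q ^ 5)
      (X ^ q ^ 5 - X ^ q ^ 4 + X ^ q ^ 3 - X ^ q ^ 2 + X ^ q - X) ?_ ?_ ?_
    · intro h
      have hc : (X ^ q ^ 5 - X ^ q ^ 4 + X ^ q ^ 3 - X ^ q ^ 2 + X ^ q - X : F[X]).coeff (q ^ 5)
          = 1 := by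
        have e1 := hpow_ne 4 5 (by omega)
        have e2 := hpow_ne 3 5 (by omega)
        have e3 := hpow_ne 2 5 (by omega)
        have e4 : q ≠ q ^ 5 := by simpa using hpow_ne 1 5 (by omega)
        have e5 : (1 : ℕ) ≠ q ^ 5 := by
          have := hpow_ne 0 5 (by omega); simpa using this
        simp only [coeff_sub, coeff_add, coeff_X_pow, coeff_X]
        simp [e1, e2, e3, e4, e5, Ne.symm e1, Ne.symm e2, Ne.symm e3, Ne.symm e4, Ne.symm e5]
      rw [h] at hc
      simp at hc
    · refine le_trans (natDegree_sub_le _ _) (max_le (le_trans (natDegree_add_le _ _)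
        (max_le (le_trans (natDegree_sub_le _ _) (max_le (le_trans (natDegree_add_le _ _)
        (max_le (le_trans (natDegree_sub_le _ _) (max_le ?_ ?_)) ?_)) ?_)) ?_)) ?_)
      · simp [natDegree_X_pow]
      · simp only [natDegree_X_pow]
        exact Nat.pow_le_pow_right (by omega) (by omega)
      · simp only [natDegree_X_pow]
        exact Nat.pow_le_pow_right (by omega) (by omega)
      · simp only [natDegree_X_pow]
        exact Nat.pow_le_pow_right (by omega) (by omega)
      · simp only [natDegree_X_pow]
        calc q = q ^ 1 := (pow_one q).symm
        _ ≤ q ^ 5 := Nat.pow_le_pow_right (by omega) (by omega)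
      · simp only [natDegree_X]
        exact Nat.one_le_pow _ _ hq0
    · intro x hx; simpa using hx
  have hker_M_le : #(univ.filter fun y : F => y ^ q ^ 2 - y = 0) ≤ q ^ 2 := by
    refine card_eval_le _ (q ^ 2) (X ^ q ^ 2 - X) ?_ ?_ ?_
    · refine (monic_X_pow_sub ?_).ne_zero
      rw [degree_X]
      exact_mod_cast (by nlinarith : 1 < q ^ 2)
    · refine le_trans (natDegree_sub_le _ _) ?_
      simp only [natDegree_X_pow, natDegree_X]
      omega
    · intro x hx; simpa using hx
  have hcoker_M_le : #(univ.filter fun u : F => u ^ q ^ 4 + u ^ q ^ 2 + u = 0) ≤ q ^ 4 := by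
    refine card_eval_le _ (q ^ 4) (X ^ q ^ 4 + X ^ q ^ 2 + X) ?_ ?_ ?_
    · intro h
      have hc : (X ^ q ^ 4 + X ^ q ^ 2 + X : F[X]).coeff (q ^ 4) = 1 := by
        have e1 := hpow_ne 2 4 (by omega)
        have e5 : (1 : ℕ) ≠ q ^ 4 := by
          have := hpow_ne 0 4 (by omega); simpa using this
        simp only [coeff_add, coeff_X_pow, coeff_X]
        simp [e1, e5, Ne.symm e1, Ne.symm e5]
      rw [h] at hc
      simp at hc
    · refine le_trans (natDegree_add_le _ _) (max_le (le_trans (natDegree_add_le _ _)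
        (max_le ?_ ?_)) ?_)
      · simp [natDegree_X_pow]
      · simp only [natDegree_X_pow]
        exact Nat.pow_le_pow_right (by omega) (by omega)
      · simp only [natDegree_X]
        exact Nat.one_le_pow _ _ hq0
    · intro x hx; simpa using hx
  -- fiber counts for the additive maps
  have countL : ∀ a : F, a ^ q ^ 5 - a ^ q ^ 4 + a ^ q ^ 3 - a ^ q ^ 2 + a ^ q - a = 0 →
      #(univ.filter fun x : F => x ^ q + x = a) = q := by
    refine add_map_count (fun x => x ^ q + x)
      (fun u => u ^ q ^ 5 - u ^ q ^ 4 + u ^ q ^ 3 - u ^ q ^ 2 + u ^ q - u)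
      (fun a b => by
        show (a + b) ^ q + (a + b) = (a ^ q + a) + (b ^ q + b)
        rw [hadd]; ring) (fun x => Tcomp hadd x (hpow6 x)) q (q ^ 5) hq0
      (by rw [hF]; ring) hker_L_le hcoker_T_le
  have countM : ∀ a : F, a ^ q ^ 4 + a ^ q ^ 2 + a = 0 →
      #(univ.filter fun y : F => y ^ q ^ 2 - y = a) = q ^ 2 := by
    refine add_map_count (fun y => y ^ q ^ 2 - y) (fun u => u ^ q ^ 4 + u ^ q ^ 2 + u)
      (fun a b => by
        show (a + b) ^ q ^ 2 - (a + b) = (a ^ q ^ 2 - a) + (b ^ q ^ 2 - b)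
        rw [frob_add_iter hadd 2]; ring) (fun y => Mcomp hq0 hadd y (hpow6 y))
      (q ^ 2) (q ^ 4) (pow_pos hq0 2) (by rw [hF]; ring) hker_M_le hcoker_M_le
  -- sets
  set S : Finset (F × F × F) := univ.filter (fun t : F × F × F =>
    t.2.2 ^ (q ^ 2 - q + 1) = t.2.1 ^ (q ^ 2) - t.2.1 ∧
    t.2.1 ^ (q + 1) = t.1 ^ q + t.1 ∧ t.2.2 ≠ 0) with hS
  set B : Finset (F × F) := univ.filter (fun t : F × F =>
    t.2 ^ (q + 1) = t.1 ^ q + t.1 ∧ t.2 ^ q ^ 2 - t.2 ≠ 0) with hB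
  set C : Finset F := univ.filter (fun y : F => y ^ q ^ 2 - y ≠ 0 ∧
    (y ^ q ^ 2 - y) ^ ((q + 1) * (q ^ 2 - 1)) + (y ^ q ^ 2 - y) ^ (q * (q ^ 2 - 1)) + 1 = 0)
    with hC
  set D : Finset F := univ.filter (fun w : F => w ≠ 0 ∧
    w ^ ((q + 1) * (q ^ 2 - 1)) + w ^ (q * (q ^ 2 - 1)) + 1 = 0) with hD
  set V : Finset F := univ.filter (fun v : F => v ^ (q + 1) + v ^ q + 1 = 0) with hV
  -- conversion helpers
  have hws_of : ∀ x y : F, y ^ (q + 1) = x ^ q + x →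
      (y ^ q ^ 2 - y) ^ (q ^ 3 + q ^ 2) + (y ^ q ^ 2 - y) ^ (q ^ 3 + 1)
        + (y ^ q ^ 2 - y) ^ (q + 1) = 0 := by
    intro x y hherm
    have hk := keyT hq0 hadd y (hpow6 y)
    rw [hherm] at hk
    have ht := Tcomp hadd x (hpow6 x)
    linear_combination hk - ht
  have hcond_of_hws : ∀ w : F, w ≠ 0 →
      w ^ (q ^ 3 + q ^ 2) + w ^ (q ^ 3 + 1) + w ^ (q + 1) = 0 →
      w ^ ((q + 1) * (q ^ 2 - 1)) + w ^ (q * (q ^ 2 - 1)) + 1 = 0 := by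
    intro w hw h
    have hfac : w ^ (q + 1) * (w ^ ((q + 1) * (q ^ 2 - 1)) + w ^ (q * (q ^ 2 - 1)) + 1)
        = w ^ (q + 1) * 0 := by
      rw [mul_zero, mul_add, mul_add, mul_one, ← pow_add, ← pow_add, he1, he2]
      linear_combination h
    exact mul_left_cancel₀ (pow_ne_zero _ hw) hfac
  have hws_of_cond : ∀ w : F,
      w ^ ((q + 1) * (q ^ 2 - 1)) + w ^ (q * (q ^ 2 - 1)) + 1 = 0 →
      w ^ (q ^ 3 + q ^ 2) + w ^ (q ^ 3 + 1) + w ^ (q + 1) = 0 := by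
    intro w h
    have hfac : w ^ (q ^ 3 + q ^ 2) + w ^ (q ^ 3 + 1) + w ^ (q + 1)
        = w ^ (q + 1) * (w ^ ((q + 1) * (q ^ 2 - 1)) + w ^ (q * (q ^ 2 - 1)) + 1) := by
      rw [mul_add, mul_add, mul_one, ← pow_add, ← pow_add, he1, he2]
    rw [hfac, h, mul_zero]
  have hT_of_cond : ∀ y : F,
      (y ^ q ^ 2 - y) ^ ((q + 1) * (q ^ 2 - 1)) + (y ^ q ^ 2 - y) ^ (q * (q ^ 2 - 1)) + 1 = 0 →
      (y ^ (q + 1)) ^ q ^ 5 - (y ^ (q + 1)) ^ q ^ 4 + (y ^ (q + 1)) ^ q ^ 3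
        - (y ^ (q + 1)) ^ q ^ 2 + (y ^ (q + 1)) ^ q - y ^ (q + 1) = 0 := by
    intro y h
    have hk := keyT hq0 hadd y (hpow6 y)
    have hws := hws_of_cond _ h
    linear_combination hk - hws
  have hVvne : ∀ v : F, v ^ (q + 1) + v ^ q + 1 = 0 → v ≠ 0 := by
    intro v h h0
    rw [h0, zero_pow (by omega : q + 1 ≠ 0), zero_pow hq0.ne'] at h
    simp at h
  have hVpows : ∀ v : F, v ^ (q + 1) + v ^ q + 1 = 0 → v ^ (q ^ 4 + q ^ 2 + 1) = 1 := by
    intro v hv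
    obtain ⟨h3, hN, -⟩ := vlemma hq0 hadd hv
    have h4 : v ^ (q ^ 4) = v ^ q := by
      rw [show q ^ 4 = q ^ 3 * q from by ring, pow_mul, h3]
    calc v ^ (q ^ 4 + q ^ 2 + 1) = v ^ (q ^ 4) * v ^ (q ^ 2) * v := by
          rw [pow_add, pow_add, pow_one]
    _ = v ^ q * v ^ (q ^ 2) * v := by rw [h4]
    _ = v ^ (q ^ 2 + q + 1) := by rw [pow_add, pow_add, pow_one]; ring
    _ = 1 := hN
  have hDv : ∀ w : F,
      w ^ ((q + 1) * (q ^ 2 - 1)) + w ^ (q * (q ^ 2 - 1)) + 1 = 0 →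
      (w ^ (q ^ 2 - 1)) ^ (q + 1) + (w ^ (q ^ 2 - 1)) ^ q + 1 = 0 := by
    intro w h
    rw [show (q + 1) * (q ^ 2 - 1) = (q ^ 2 - 1) * (q + 1) from Nat.mul_comm _ _,
      show q * (q ^ 2 - 1) = (q ^ 2 - 1) * q from Nat.mul_comm _ _, pow_mul, pow_mul] at h
    exact h
  have hMc_of : ∀ w : F, w ≠ 0 →
      w ^ ((q + 1) * (q ^ 2 - 1)) + w ^ (q * (q ^ 2 - 1)) + 1 = 0 →
      w ^ q ^ 4 + w ^ q ^ 2 + w = 0 := by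
    intro w hw h
    obtain ⟨-, -, h3⟩ := vlemma hq0 hadd (hDv w h)
    have hkey : w ^ q ^ 4 + w ^ q ^ 2 + w
        = w * ((w ^ (q ^ 2 - 1)) ^ (q ^ 2 + 1) + w ^ (q ^ 2 - 1) + 1) := by
      rw [mul_add, mul_add, mul_one, ← pow_mul, ← pow_succ', ← pow_succ',
        show (q ^ 2 - 1) * (q ^ 2 + 1) + 1 = q ^ 4 from by rw [Nat.add_comm]; exact he4, he5]
    rw [hkey, h3, mul_zero]
  -- Stage 1 : S over B
  have hSB : #S = #B * (q ^ 2 - q + 1) := by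
    have hmap : ∀ t ∈ S, (t.1, t.2.1) ∈ B := by
      intro t ht
      rw [hS, mem_filter] at ht
      obtain ⟨-, hz, hherm, hzne⟩ := ht
      rw [hB, mem_filter]
      refine ⟨mem_univ _, hherm, ?_⟩
      intro h0
      rw [h0] at hz
      exact hzne ((pow_eq_zero_iff (by omega : q ^ 2 - q + 1 ≠ 0)).mp hz)
    rw [Finset.card_eq_sum_card_fiberwise hmap]
    rw [Finset.sum_congr rfl (fun b hb => ?_), Finset.sum_const, smul_eq_mul]
    rw [hB, mem_filter] at hb
    obtain ⟨-, hherm, hwne⟩ := hb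
    have htrans : #(S.filter fun t => (t.1, t.2.1) = b)
        = #(univ.filter fun z : F => z ^ (q ^ 2 - q + 1) = b.2 ^ q ^ 2 - b.2) := by
      refine Finset.card_nbij' (fun t => t.2.2) (fun z => (b.1, b.2, z)) ?_ ?_ ?_ ?_
      · intro t ht
        rw [mem_coe, mem_filter] at ht
        obtain ⟨htS, hteq⟩ := ht
        rw [hS, mem_filter] at htS
        have hb2 : t.2.1 = b.2 := by rw [← hteq]
        refine mem_filter.mpr ⟨mem_univ _, ?_⟩
        rw [← hb2]
        exact htS.2.1
      · intro z hz
        rw [mem_coe, mem_filter] at hz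
        show (b.1, b.2, z) ∈ S.filter fun t => (t.1, t.2.1) = b
        rw [mem_filter, hS, mem_filter]
        refine ⟨⟨mem_univ _, hz.2, hherm, ?_⟩, rfl⟩
        intro h0
        have h0' : z = 0 := h0
        rw [h0', zero_pow (by omega : q ^ 2 - q + 1 ≠ 0)] at hz
        exact hwne hz.2.symm
      · intro t ht
        rw [mem_coe, mem_filter] at ht
        obtain ⟨-, hteq⟩ := ht
        have hb1 : t.1 = b.1 := by rw [← hteq]
        have hb2 : t.2.1 = b.2 := by rw [← hteq]
        simp [Prod.ext_iff, hb1.symm, hb2.symm]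
      · intro z hz
        rfl
    rw [htrans]
    refine pow_count (q ^ 2 - q + 1) ((q + 1) * (q ^ 3 - 1)) hn1pos (by rw [hF]; exact hnn')
      _ hwne ?_
    have hp3 := herm_pow hq0 hadd b.1 b.2 (hpow6 b.1) (hpow6 b.2) hherm
    have hcan : (b.2 ^ q ^ 2 - b.2) ^ ((q + 1) * (q ^ 3 - 1)) * (b.2 ^ q ^ 2 - b.2) ^ (q + 1)
        = 1 * (b.2 ^ q ^ 2 - b.2) ^ (q + 1) := by
      rw [one_mul, ← pow_add, he6, pow_mul]
      exact hp3
    exact mul_right_cancel₀ (pow_ne_zero _ hwne) hcan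
  -- Stage 2 : B over C
  have hBC : #B = #C * q := by
    have hmap : ∀ t ∈ B, t.2 ∈ C := by
      intro t ht
      rw [hB, mem_filter] at ht
      obtain ⟨-, hherm, hwne⟩ := ht
      rw [hC, mem_filter]
      exact ⟨mem_univ _, hwne, hcond_of_hws _ hwne (hws_of _ _ hherm)⟩
    rw [Finset.card_eq_sum_card_fiberwise hmap]
    rw [Finset.sum_congr rfl (fun y hy => ?_), Finset.sum_const, smul_eq_mul]
    rw [hC, mem_filter] at hy
    obtain ⟨-, hwne, hcnd⟩ := hy
    have htrans : #(B.filter fun t => t.2 = y)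
        = #(univ.filter fun x : F => x ^ q + x = y ^ (q + 1)) := by
      refine Finset.card_nbij' (fun t => t.1) (fun x => (x, y)) ?_ ?_ ?_ ?_
      · intro t ht
        rw [mem_coe, mem_filter] at ht
        obtain ⟨htB, hteq⟩ := ht
        rw [hB, mem_filter] at htB
        refine mem_filter.mpr ⟨mem_univ _, ?_⟩
        rw [← hteq]
        exact htB.2.1.symm
      · intro x hx
        rw [mem_coe, mem_filter] at hx
        show (x, y) ∈ B.filter fun t => t.2 = y
        rw [mem_filter, hB, mem_filter]
        exact ⟨⟨mem_univ _, hx.2.symm, hwne⟩, rfl⟩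
      · intro t ht
        rw [mem_coe, mem_filter] at ht
        obtain ⟨-, hteq⟩ := ht
        simp [Prod.ext_iff, hteq]
      · intro x hx
        rfl
    rw [htrans]
    exact countL (y ^ (q + 1)) (hT_of_cond y hcnd)
  -- Stage 3 : C over D
  have hCD : #C = #D * q ^ 2 := by
    have hmap : ∀ y ∈ C, (y ^ q ^ 2 - y) ∈ D := by
      intro y hy
      rw [hC, mem_filter] at hy
      rw [hD, mem_filter]
      exact ⟨mem_univ _, hy.2⟩
    rw [Finset.card_eq_sum_card_fiberwise hmap]
    rw [Finset.sum_congr rfl (fun w hw => ?_), Finset.sum_const, smul_eq_mul]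
    rw [hD, mem_filter] at hw
    obtain ⟨-, hwne, hcnd⟩ := hw
    have hfe : (C.filter fun y => y ^ q ^ 2 - y = w)
        = univ.filter fun y : F => y ^ q ^ 2 - y = w := by
      ext y
      rw [mem_filter, mem_filter, mem_filter]
      constructor
      · rintro ⟨-, h⟩
        exact ⟨mem_univ _, h⟩
      · rintro ⟨-, h⟩
        refine ⟨⟨mem_univ _, ?_, ?_⟩, h⟩
        · rw [h]; exact hwne
        · rw [h]; exact hcnd
    rw [hfe]
    exact countM w (hMc_of w hwne hcnd)
  -- Stage 4 : D over V
  have hDV : #D = #V * (q ^ 2 - 1) := by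
    have hmap : ∀ w ∈ D, w ^ (q ^ 2 - 1) ∈ V := by
      intro w hw
      rw [hD, mem_filter] at hw
      rw [hV, mem_filter]
      exact ⟨mem_univ _, hDv w hw.2.2⟩
    rw [Finset.card_eq_sum_card_fiberwise hmap]
    rw [Finset.sum_congr rfl (fun v hv => ?_), Finset.sum_const, smul_eq_mul]
    rw [hV, mem_filter] at hv
    obtain ⟨-, hvV⟩ := hv
    have hfe : (D.filter fun w => w ^ (q ^ 2 - 1) = v)
        = univ.filter fun w : F => w ^ (q ^ 2 - 1) = v := by
      ext w
      rw [mem_filter, mem_filter, mem_filter]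
      constructor
      · rintro ⟨-, h⟩
        exact ⟨mem_univ _, h⟩
      · rintro ⟨-, h⟩
        have hwne : w ≠ 0 := by
          intro h0
          rw [h0, zero_pow (by omega : q ^ 2 - 1 ≠ 0)] at h
          exact hVvne v hvV h.symm
        refine ⟨⟨mem_univ _, hwne, ?_⟩, h⟩
        rw [show (q + 1) * (q ^ 2 - 1) = (q ^ 2 - 1) * (q + 1) from Nat.mul_comm _ _,
          show q * (q ^ 2 - 1) = (q ^ 2 - 1) * q from Nat.mul_comm _ _, pow_mul, pow_mul, h]
        exact hvV
    rw [hfe]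
    exact pow_count (q ^ 2 - 1) (q ^ 4 + q ^ 2 + 1) (by omega) (by rw [hF]; exact hcv) v
      (hVvne v hvV) (hVpows v hvV)
  have hVcard : #V = q + 1 := stageV p m q hpp hm hqe hF
  -- final arithmetic
  have hc68 : q ^ 6 ≤ q ^ 8 := Nat.pow_le_pow_right (by omega) (by omega)
  have hc35 : q ^ 3 ≤ q ^ 5 := Nat.pow_le_pow_right (by omega) (by omega)
  have hc2 : q ^ 3 ≤ q ^ 8 - q ^ 6 + q ^ 5 := le_trans hc35 (Nat.le_add_left _ _)
  constructor
  · have hsetS : {p : F × F × F | p.2.2 ^ (q ^ 2 - q + 1) = p.2.1 ^ (q ^ 2) - p.2.1 ∧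
        p.2.1 ^ (q + 1) = p.1 ^ q + p.1 ∧ p.2.2 ≠ 0} = ↑S := by
      rw [hS]
      ext t
      simp [mem_filter]
    rw [hsetS, Set.ncard_coe_finset, hSB, hBC, hCD, hDV, hVcard]
    zify [hqq2, h1q2, hc68, hc2]
    ring
  · zify [h1q2, hc68, hc2]
    ring
end
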